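/- For every cardinal κ ≥ 1, every real ε > 0 and every loop L : [0,1] → 𝔾𝕊_κ with L(0) = L(1) = ∘_κ, there exists a loop based at ∘_κ that is homotopic to L rel {0,1} and whose image has diameter at most ε. -/

import Mathlib

noncomputable section

open Set

namespace Griffiths

/-- The one-fold Griffiths cone over the Hawaiian earring, as a subset of Euclidean 3-space:
the union over heights `r ∈ [0,1]` and `n ∈ ℕ` of the circle at height `r` with center
`(0, (1-r)/(n+3))` and radius `(1-r)/(n+3)` (the geodesic cone over the Hawaiian earring
`𝔼 × {0}` with cone tip `(0,0,1)`). -/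
def GS1set : Set (EuclideanSpace ℝ (Fin 3)) :=
  ⋃ r ∈ Set.Icc (0 : ℝ) 1, ⋃ n : ℕ,
    {x | x 0 ^ 2 + (x 1 - (1 - r) / (n + 3)) ^ 2 = ((1 - r) / (n + 3)) ^ 2 ∧ x 2 = r}

lemma zero_mem_GS1set : (0 : EuclideanSpace ℝ (Fin 3)) ∈ GS1set := by
  have h0 : (0:ℝ) ∈ Set.Icc (0:ℝ) 1 := by norm_num
  refine Set.mem_biUnion h0 (Set.mem_iUnion.2 ⟨0, ?_, ?_⟩) <;> simp

/-- The relation identifying the copies of the origin `(0,0,0)` in the disjoint union of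
`ι`-many copies of `𝔾𝕊₁`. -/
def wedgeSetoid (ι : Type) : Setoid (Σ _ : ι, GS1set) where
  r x y := x = y ∨ (x.2.val = 0 ∧ y.2.val = 0)
  iseqv := by
    constructor
    · intro x; exact Or.inl rfl
    · rintro x y (rfl | h); exacts [Or.inl rfl, Or.inr ⟨h.2, h.1⟩]
    · rintro x y z (rfl | h) (rfl | h')
      · exact Or.inl rfl
      · exact Or.inr h'
      · exact Or.inr h
      · exact Or.inr ⟨h.1, h'.2⟩

/-- The `ι`-fold Griffiths space: the wedge of `ι`-many copies of `𝔾𝕊₁` at the point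
`(0,0,0)`. -/
def GS (ι : Type) : Type := Quotient (wedgeSetoid ι)

/-- The wedge metric on representatives. -/
def preDist {ι : Type} (x y : Σ _ : ι, GS1set) : ℝ :=
  @ite _ (x.1 = y.1) (Classical.dec _)
    (dist (x.2.val) (y.2.val))
    (dist (x.2.val) 0 + dist (0 : EuclideanSpace ℝ (Fin 3)) (y.2.val))

lemma preDist_wd {ι : Type} (x y x' y' : Σ _ : ι, GS1set)
    (hx : (wedgeSetoid ι).r x x') (hy : (wedgeSetoid ι).r y y') :
    preDist x y = preDist x' y' := by
  classical
  have key : ∀ a b c : Σ _ : ι, GS1set, a.2.val = 0 → b.2.val = 0 →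
      preDist a c = preDist b c := by
    intro a b c ha hb
    unfold preDist
    by_cases h1 : a.1 = c.1 <;> by_cases h2 : b.1 = c.1 <;>
      simp [h1, h2, ha, hb, dist_comm]
  have symmkey : ∀ a c d : Σ _ : ι, GS1set, c.2.val = 0 → d.2.val = 0 →
      preDist a c = preDist a d := by
    intro a c d hc hd
    unfold preDist
    by_cases h1 : a.1 = c.1 <;> by_cases h2 : a.1 = d.1 <;>
      simp [h1, h2, hc, hd]
  rcases hx with rfl | hx
  · rcases hy with rfl | hy
    · rfl
    · exact symmkey _ _ _ hy.1 hy.2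
  · rcases hy with rfl | hy
    · exact key _ _ _ hx.1 hx.2
    · rw [key _ x' _ hx.1 hx.2, symmkey _ _ _ hy.1 hy.2]

instance GSMetric (ι : Type) : MetricSpace (GS ι) where
  dist := Quotient.lift₂ preDist fun a₁ b₁ a₂ b₂ h₁ h₂ => preDist_wd a₁ b₁ a₂ b₂ h₁ h₂
  dist_self := by
    rintro ⟨x⟩
    show preDist x x = 0
    simp [preDist]
  dist_comm := by
    rintro ⟨x⟩ ⟨y⟩
    show preDist x y = preDist y x
    unfold preDist
    by_cases h : x.1 = y.1
    · rw [if_pos h, if_pos h.symm, dist_comm]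
    · have h' : ¬ y.1 = x.1 := fun hh => h hh.symm
      rw [if_neg h, if_neg h', dist_comm (x.2.val) (0 : EuclideanSpace ℝ (Fin 3)),
        dist_comm ((0 : EuclideanSpace ℝ (Fin 3))) (y.2.val)]
      ring
  dist_triangle := by
    rintro ⟨x⟩ ⟨y⟩ ⟨z⟩
    show preDist x z ≤ preDist x y + preDist y z
    unfold preDist
    have t3 := dist_triangle (x.2.val) (y.2.val) (z.2.val)
    have txy0 := dist_triangle (x.2.val) (y.2.val) (0 : EuclideanSpace ℝ (Fin 3))
    have t0yz := dist_triangle (0 : EuclideanSpace ℝ (Fin 3)) (y.2.val) (z.2.val)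
    have tx0z := dist_triangle (x.2.val) (0 : EuclideanSpace ℝ (Fin 3)) (z.2.val)
    have h0y : (0:ℝ) ≤ dist (0 : EuclideanSpace ℝ (Fin 3)) (y.2.val) := dist_nonneg
    have hy0 : (0:ℝ) ≤ dist (y.2.val) (0 : EuclideanSpace ℝ (Fin 3)) := dist_nonneg
    have hcy : dist (y.2.val) (0 : EuclideanSpace ℝ (Fin 3))
        = dist (0 : EuclideanSpace ℝ (Fin 3)) (y.2.val) := dist_comm _ _
    split_ifs with h1 h2 h3 h3' h2' h3'' h3'''
    all_goals
      first
        | exact absurd (‹x.1 = y.1›.trans ‹y.1 = z.1›) ‹¬ x.1 = z.1›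
        | exact absurd (‹x.1 = y.1›.symm.trans ‹x.1 = z.1›) ‹¬ y.1 = z.1›
        | exact absurd (‹x.1 = z.1›.trans ‹y.1 = z.1›.symm) ‹¬ x.1 = y.1›
        | linarith
  eq_of_dist_eq_zero := by
    rintro ⟨x⟩ ⟨y⟩ h
    replace h : preDist x y = 0 := h
    unfold preDist at h
    apply Quotient.sound
    by_cases hxy : x.1 = y.1
    · rw [if_pos hxy] at h
      left
      obtain ⟨a, xv⟩ := x
      obtain ⟨b, yv⟩ := y
      cases hxy
      have : xv = yv := Subtype.ext (by simpa using dist_eq_zero.mp h)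
      rw [this]
    · rw [if_neg hxy] at h
      right
      have hx0 : (0:ℝ) ≤ dist (x.2.val) (0 : EuclideanSpace ℝ (Fin 3)) := dist_nonneg
      have h0y : (0:ℝ) ≤ dist (0 : EuclideanSpace ℝ (Fin 3)) (y.2.val) := dist_nonneg
      have h1 : dist (x.2.val) (0 : EuclideanSpace ℝ (Fin 3)) = 0 := by linarith
      have h2 : dist (0 : EuclideanSpace ℝ (Fin 3)) (y.2.val) = 0 := by linarith
      exact ⟨dist_eq_zero.mp h1, (dist_eq_zero.mp h2).symm⟩

/-- The wedge point `∘` of the `ι`-fold Griffiths space. -/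
def basept {ι : Type} (a : ι) : GS ι := ⟦⟨a, ⟨0, zero_mem_GS1set⟩⟩⟧

lemma basept_eq {ι : Type} (a b : ι) : basept a = basept b :=
  Quotient.sound (Or.inr ⟨rfl, rfl⟩)

end Griffiths

namespace Griffiths

open unitInterval

/-- The cone tip. -/
noncomputable def tip : EuclideanSpace ℝ (Fin 3) := EuclideanSpace.single 2 1

lemma mem_GS1set_iff {x : EuclideanSpace ℝ (Fin 3)} :
    x ∈ GS1set ↔ ∃ r ∈ Set.Icc (0:ℝ) 1, ∃ n : ℕ,
      x 0 ^ 2 + (x 1 - (1 - r) / (n + 3)) ^ 2 = ((1 - r) / (n + 3)) ^ 2 ∧ x 2 = r := by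
  simp only [GS1set, Set.mem_iUnion, Set.mem_setOf_eq]
  constructor
  · rintro ⟨r, hr, n, h1, h2⟩; exact ⟨r, hr, n, h1, h2⟩
  · rintro ⟨r, hr, n, h1, h2⟩; exact ⟨r, hr, n, h1, h2⟩

lemma tip_mem : tip ∈ GS1set := by
  rw [mem_GS1set_iff]
  refine ⟨1, by norm_num, 0, ?_, ?_⟩ <;>
    simp [tip, EuclideanSpace.single_apply]

lemma star_mem {x : EuclideanSpace ℝ (Fin 3)} (hx : x ∈ GS1set) {s : ℝ}
    (hs0 : 0 ≤ s) (hs1 : s ≤ 1) : (1 - s) • x + s • tip ∈ GS1set := by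
  rw [mem_GS1set_iff] at hx ⊢
  obtain ⟨r, ⟨hr0, hr1⟩, n, hcirc, hx2⟩ := hx
  have e0 : ((1 - s) • x + s • tip) 0 = (1 - s) * x 0 := by
    simp [tip, PiLp.add_apply, PiLp.smul_apply, EuclideanSpace.single_apply, smul_eq_mul]
  have e1 : ((1 - s) • x + s • tip) 1 = (1 - s) * x 1 := by
    simp [tip, PiLp.add_apply, PiLp.smul_apply, EuclideanSpace.single_apply, smul_eq_mul]
  have e2 : ((1 - s) • x + s • tip) 2 = (1 - s) * x 2 + s := by
    simp [tip, PiLp.add_apply, PiLp.smul_apply, EuclideanSpace.single_apply, smul_eq_mul]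
  refine ⟨(1 - s) * r + s, ⟨by nlinarith, by nlinarith⟩, n, ?_, ?_⟩
  · rw [e0, e1]
    linear_combination (1 - s) ^ 2 * hcirc
  · rw [e2, hx2]

instance : ContractibleSpace GS1set := by
  rw [contractible_iff_id_nullhomotopic]
  refine ⟨⟨tip, tip_mem⟩, ⟨⟨⟨fun p =>
    ⟨(1 - (p.1 : ℝ)) • (p.2 : EuclideanSpace ℝ (Fin 3)) + (p.1 : ℝ) • tip,
      star_mem p.2.2 p.1.2.1 p.1.2.2⟩, ?_⟩, ?_, ?_⟩⟩⟩
  · apply Continuous.subtype_mk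
    exact ((continuous_const.sub (continuous_subtype_val.comp continuous_fst)).smul
        (continuous_subtype_val.comp continuous_snd)).add
      ((continuous_subtype_val.comp continuous_fst).smul continuous_const)
  · intro x
    apply Subtype.ext
    show (1 - ((0:I) : ℝ)) • (x : EuclideanSpace ℝ (Fin 3)) + ((0:I) : ℝ) • tip = x
    simp
  · intro x
    apply Subtype.ext
    show (1 - ((1:I) : ℝ)) • (x : EuclideanSpace ℝ (Fin 3)) + ((1:I) : ℝ) • tip = tip
    simp

/-- `Quotient.mk` with the right target type. -/
def mkGS {ι : Type} (u : Σ _ : ι, GS1set) : GS ι := Quotient.mk (wedgeSetoid ι) u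

/-- Inclusion of one copy of the cone into the wedge. -/
def incl (ι : Type) (α : ι) (x : GS1set) : GS ι := mkGS ⟨α, x⟩

lemma dist_mk {ι : Type} (u v : Σ _ : ι, GS1set) :
    dist (mkGS u) (mkGS v) = preDist u v := rfl

lemma incl_dist {ι : Type} (α : ι) (x y : GS1set) :
    dist (incl ι α x) (incl ι α y) = dist x y := by
  have h : dist (incl ι α x) (incl ι α y) = preDist ⟨α, x⟩ ⟨α, y⟩ := rfl
  rw [h, Subtype.dist_eq]
  unfold preDist
  rw [if_pos rfl]

lemma incl_injective (ι : Type) (α : ι) : Function.Injective (incl ι α) := by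
  intro x y h
  rcases Quotient.exact h with h' | h'
  · simpa using h'
  · exact Subtype.ext (h'.1.trans h'.2.symm)

lemma incl_zero_eq {ι : Type} (α a : ι) :
    incl ι α ⟨0, zero_mem_GS1set⟩ = basept a := basept_eq α a

/-- The open part of the `α`-th copy in the wedge (complement of the wedge point within
that copy). -/
def piece (ι : Type) (α : ι) : Set (GS ι) := {p | ∃ x : GS1set, x.val ≠ 0 ∧ p = incl ι α x}

lemma piece_open {ι : Type} (α : ι) : IsOpen (piece ι α) := by
  rw [Metric.isOpen_iff]
  rintro p ⟨x, hx, rfl⟩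
  refine ⟨dist x.val 0, dist_pos.2 hx, ?_⟩
  intro q hq
  obtain ⟨⟨β, y⟩, rfl⟩ := Quotient.exists_rep q
  have hq : dist (mkGS (⟨β, y⟩ : Σ _ : ι, GS1set)) (incl ι α x) < dist x.val 0 := hq
  by_cases hβ : β = α
  · subst hβ
    by_cases hy : y.val = 0
    · exfalso
      have h : dist (mkGS (⟨β, y⟩ : Σ _ : ι, GS1set)) (incl ι β x)
          = dist y.val x.val := incl_dist β y x
      have hq' : dist (mkGS (⟨β, y⟩ : Σ _ : ι, GS1set)) (incl ι β x) < dist x.val 0 := hq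
      rw [h, hy, dist_comm] at hq'
      exact lt_irrefl _ hq'
    · exact ⟨y, hy, rfl⟩
  · exfalso
    have h : dist (mkGS (⟨β, y⟩ : Σ _ : ι, GS1set)) (incl ι α x)
        = dist y.val 0 + dist (0 : EuclideanSpace ℝ (Fin 3)) x.val := by
      show preDist ⟨β, y⟩ ⟨α, x⟩ = _
      unfold preDist
      rw [if_neg hβ]
    have hq' : dist (mkGS (⟨β, y⟩ : Σ _ : ι, GS1set)) (incl ι α x) < dist x.val 0 := hq
    rw [h] at hq'
    have h1 : (0:ℝ) ≤ dist y.val 0 := dist_nonneg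
    have h2 : dist (0 : EuclideanSpace ℝ (Fin 3)) x.val = dist x.val 0 := dist_comm _ _
    linarith

lemma exists_piece {ι : Type} (a : ι) {p : GS ι} (hp : p ≠ basept a) :
    ∃ α, p ∈ piece ι α := by
  obtain ⟨⟨β, y⟩, rfl⟩ := Quotient.exists_rep p
  by_cases hy : y.val = 0
  · exfalso
    exact hp (Quotient.sound (Or.inr ⟨hy, rfl⟩))
  · exact ⟨β, y, hy, rfl⟩

lemma piece_disjoint {ι : Type} {α β : ι} (h : α ≠ β) {p : GS ι}
    (h1 : p ∈ piece ι α) (h2 : p ∈ piece ι β) : False := by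
  obtain ⟨x, hx, rfl⟩ := h1
  obtain ⟨y, hy, he⟩ := h2
  rcases Quotient.exact he with h' | h'
  · exact h (congrArg Sigma.fst h')
  · exact hx h'.1

lemma piece_subset_range {ι : Type} (α : ι) : piece ι α ⊆ Set.range (incl ι α) := by
  rintro p ⟨x, _, rfl⟩
  exact ⟨x, rfl⟩

end Griffiths

namespace Griffiths

open unitInterval

/-- Extension of a map on the unit interval to `ℝ` by projection. -/
def ext01 {X : Type*} (f : I → X) (t : ℝ) : X := f (Set.projIcc 0 1 zero_le_one t)

lemma ext01_coe {X : Type*} (f : I → X) (t : I) : ext01 f t.val = f t := by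
  rw [ext01, Set.projIcc_val]

lemma ext01_of_mem {X : Type*} (f : I → X) {t : ℝ} (ht : t ∈ Set.Icc (0:ℝ) 1) :
    ext01 f t = f ⟨t, ht⟩ := by
  rw [ext01, Set.projIcc_of_mem]

lemma ext01_continuous {X : Type*} [TopologicalSpace X] (f : C(I, X)) :
    Continuous (ext01 ⇑f) := f.continuous.comp continuous_projIcc

lemma subloop_nullhomotopic {ι : Type} (a : ι) (L : Path (basept a) (basept a))
    {c b : ℝ} (h0 : 0 ≤ c) (hcb : c < b) (h1 : b ≤ 1)
    (hc : ext01 ⇑L c = basept a) (hb : ext01 ⇑L b = basept a)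
    (hint : ∀ t ∈ Set.Ioo c b, ext01 ⇑L t ≠ basept a)
    (γ : Path (basept a) (basept a))
    (hγ : ∀ s : I, γ s = ext01 ⇑L (c + s.val * (b - c))) :
    Nonempty (γ.Homotopy (Path.refl (basept a))) := by
  have hcont : Continuous (ext01 ⇑L) := ext01_continuous L.toContinuousMap
  have ht₀ : (c + b) / 2 ∈ Set.Ioo c b := ⟨by linarith, by linarith⟩
  obtain ⟨α, hα⟩ := exists_piece a (hint _ ht₀)
  -- every interior point lies in the `α`-th piece
  have key : ∀ t ∈ Set.Ioo c b, ext01 ⇑L t ∈ piece ι α := by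
    by_contra hcon
    push_neg at hcon
    obtain ⟨t₁, ht₁, ht₁'⟩ := hcon
    set U : Set ℝ := ext01 ⇑L ⁻¹' (piece ι α) with hUdef
    set V : Set ℝ := ext01 ⇑L ⁻¹' (⋃ β ∈ {β : ι | β ≠ α}, piece ι β) with hVdef
    have hU : IsOpen U := (piece_open α).preimage hcont
    have hV : IsOpen V :=
      (isOpen_biUnion fun β _ => piece_open β).preimage hcont
    have hsub : Set.Ioo c b ⊆ U ∪ V := by
      intro t ht
      obtain ⟨β, hβ⟩ := exists_piece a (hint t ht)
      by_cases hβα : β = α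
      · exact Or.inl (by rw [hUdef]; exact Set.mem_preimage.2 (hβα ▸ hβ))
      · exact Or.inr (by
          rw [hVdef]
          exact Set.mem_preimage.2 (Set.mem_biUnion hβα hβ))
    have ht₁V : t₁ ∈ V := by
      obtain ⟨β, hβ⟩ := exists_piece a (hint t₁ ht₁)
      have hβα : β ≠ α := fun h => ht₁' (h ▸ hβ)
      rw [hVdef]
      exact Set.mem_preimage.2 (Set.mem_biUnion hβα hβ)
    obtain ⟨t₂, -, ht₂U, ht₂V⟩ :=
      isPreconnected_Ioo U V hU hV hsub ⟨_, ht₀, hα⟩ ⟨t₁, ht₁, ht₁V⟩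
    rw [hVdef] at ht₂V
    obtain ⟨β, hβα, hmem⟩ := Set.mem_iUnion₂.1 (Set.mem_preimage.1 ht₂V)
    exact piece_disjoint (Ne.symm hβα) ht₂U hmem
  have keyIcc : ∀ t ∈ Set.Icc c b, ext01 ⇑L t ∈ Set.range (incl ι α) := by
    intro t ht
    rcases eq_or_lt_of_le ht.1 with rfl | hl
    · exact ⟨⟨0, zero_mem_GS1set⟩, by rw [incl_zero_eq α a, hc]⟩
    rcases eq_or_lt_of_le ht.2 with rfl | hr
    · exact ⟨⟨0, zero_mem_GS1set⟩, by rw [incl_zero_eq α a, hb]⟩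
    exact piece_subset_range α (key t ⟨hl, hr⟩)
  have hmemγ : ∀ s : I, ∃ x : GS1set, incl ι α x = γ s := by
    intro s
    rw [hγ]
    apply keyIcc
    constructor
    · nlinarith [s.2.1, s.2.2]
    · nlinarith [s.2.1, s.2.2]
  choose g hg using hmemγ
  have hgdist : ∀ s s' : I, dist (g s) (g s') = dist (γ s) (γ s') := by
    intro s s'
    rw [← hg s, ← hg s', incl_dist]
  have hgcont : Continuous g := by
    rw [Metric.continuous_iff]
    intro s ε hε
    obtain ⟨δ, hδ, h⟩ := Metric.continuous_iff.1 γ.continuous s ε hε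
    exact ⟨δ, hδ, fun s' hs' => by rw [hgdist]; exact h s' hs'⟩
  have hg0 : g 0 = ⟨0, zero_mem_GS1set⟩ := by
    apply incl_injective ι α
    rw [hg, incl_zero_eq α a]
    exact γ.source
  have hg1 : g 1 = ⟨0, zero_mem_GS1set⟩ := by
    apply incl_injective ι α
    rw [hg, incl_zero_eq α a]
    exact γ.target
  let γ' : Path (⟨0, zero_mem_GS1set⟩ : GS1set) ⟨0, zero_mem_GS1set⟩ :=
    ⟨⟨g, hgcont⟩, hg0, hg1⟩
  obtain ⟨h'⟩ := SimplyConnectedSpace.paths_homotopic γ' (Path.refl _)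
  have hinclcont : Continuous (incl ι α) := by
    apply Metric.continuous_iff.2
    intro x ε hε
    exact ⟨ε, hε, fun y hy => by rw [incl_dist]; exact hy⟩
  refine ⟨⟨⟨⟨fun p => incl ι α (h' p), hinclcont.comp h'.continuous⟩, ?_, ?_⟩, ?_⟩⟩
  · intro x
    show incl ι α (h' (0, x)) = _
    rw [h'.apply_zero]
    exact hg x
  · intro x
    show incl ι α (h' (1, x)) = _
    rw [h'.apply_one]
    exact incl_zero_eq α a
  · intro t x hx
    show incl ι α (h' (t, x)) = _
    rw [h'.eq_fst t hx]
    exact hg x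

lemma kill_one {ι : Type} (a : ι) (L : Path (basept a) (basept a))
    {c b : ℝ} (h0 : 0 ≤ c) (hcb : c < b) (h1 : b ≤ 1)
    (hc : ext01 ⇑L c = basept a) (hb : ext01 ⇑L b = basept a)
    (hint : ∀ t ∈ Set.Ioo c b, ext01 ⇑L t ≠ basept a) :
    ∃ L₁ : Path (basept a) (basept a), Path.Homotopic L L₁ ∧
      (∀ t : I, t.val ∉ Set.Ioo c b → L₁ t = L t) ∧
      (∀ t : I, t.val ∈ Set.Icc c b → L₁ t = basept a) := by
  classical
  have hcont : Continuous (ext01 ⇑L) := ext01_continuous L.toContinuousMap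
  have hbc : b - c ≠ 0 := by linarith
  -- the subloop
  have hγc : Continuous fun s : I => ext01 ⇑L (c + s.val * (b - c)) :=
    hcont.comp (continuous_const.add (continuous_subtype_val.mul continuous_const))
  let γ : Path (basept a) (basept a) :=
    ⟨⟨fun s => ext01 ⇑L (c + s.val * (b - c)), hγc⟩,
      by show ext01 ⇑L (c + ((0:I):ℝ) * (b - c)) = _; norm_num [hc],
      by show ext01 ⇑L (c + ((1:I):ℝ) * (b - c)) = _; norm_num [hb]⟩
  obtain ⟨h'⟩ := subloop_nullhomotopic a L h0 hcb h1 hc hb hint γ (fun s => rfl)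
  -- reparametrization
  let φ : ℝ → I := fun t => Set.projIcc 0 1 zero_le_one ((t - c) / (b - c))
  have hφcont : Continuous φ :=
    continuous_projIcc.comp ((continuous_id.sub continuous_const).div_const _)
  have hφmid : ∀ t : ℝ, c < t → t < b → (φ t).val = (t - c) / (b - c) := by
    intro t h h'
    have hmem : (t - c) / (b - c) ∈ Set.Icc (0:ℝ) 1 := by
      constructor
      · apply div_nonneg <;> linarith
      · rw [div_le_one (by linarith)]; linarith
    rw [show φ t = Set.projIcc 0 1 zero_le_one ((t - c)/(b - c)) from rfl,
      Set.projIcc_of_mem _ hmem]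
  have hγφ : ∀ t : ℝ, c < t → t < b → c + (φ t).val * (b - c) = t := by
    intro t h h'
    rw [hφmid t h h']
    field_simp
    ring
  have hLcoe : ∀ t : I, L t = ext01 ⇑L t.val := fun t => (ext01_coe ⇑L t).symm
  have hφ0 : φ c = 0 := by
    have h2 : (c - c) / (b - c) = 0 := by simp
    show Set.projIcc 0 1 zero_le_one ((c - c)/(b - c)) = 0
    rw [h2, Set.projIcc_left]
    rfl
  have hφb1 : φ b = 1 := by
    have h2 : (b - c) / (b - c) = 1 := by field_simp
    show Set.projIcc 0 1 zero_le_one ((b - c)/(b - c)) = 1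
    rw [h2, Set.projIcc_right]
    rfl
  have hmem0 : (0 : I) ∈ ({0, 1} : Set I) := Set.mem_insert 0 {1}
  have hmem1 : (1 : I) ∈ ({0, 1} : Set I) := Set.mem_insert_of_mem 0 rfl
  have hhc : ∀ s : I, h' (s, (0:I)) = basept a := by
    intro s
    rw [h'.eq_fst s hmem0]
    exact γ.source
  have hhb : ∀ s : I, h' (s, (1:I)) = basept a := by
    intro s
    rw [h'.eq_fst s hmem1]
    exact γ.target
  -- the new loop
  have hL1cont : Continuous fun t : I =>
      if t.val ≤ c then L t else if b ≤ t.val then L t else basept a := by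
    apply Continuous.if_le _ _ continuous_subtype_val continuous_const
    · intro t ht
      have hnb : ¬ b ≤ t.val := by rw [ht]; linarith
      show L t = if b ≤ t.val then L t else basept a
      rw [if_neg hnb, hLcoe, ht, hc]
    · exact L.continuous
    · apply Continuous.if_le L.continuous continuous_const continuous_const
        continuous_subtype_val
      intro t ht
      show L t = basept a
      rw [hLcoe, ← ht, hb]
  let L₁ : Path (basept a) (basept a) :=
    ⟨⟨fun t => if t.val ≤ c then L t else if b ≤ t.val then L t else basept a, hL1cont⟩,
      by
        show (if ((0:I):ℝ) ≤ c then L 0 else if b ≤ ((0:I):ℝ) then L 0 else basept a) = _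
        rw [if_pos (by norm_num; exact h0)]
        exact L.source,
      by
        show (if ((1:I):ℝ) ≤ c then L 1 else if b ≤ ((1:I):ℝ) then L 1 else basept a) = _
        rw [if_neg (by norm_num; linarith), if_pos (by norm_num; exact h1)]
        exact L.target⟩
  have hHFcont : Continuous fun p : I × I =>
      if p.2.val ≤ c then L p.2 else if b ≤ p.2.val then L p.2 else h' (p.1, φ p.2.val) := by
    apply Continuous.if_le _ _ (continuous_subtype_val.comp continuous_snd) continuous_const
    · intro p hp
      have hp' : (p.2 : ℝ) = c := hp
      have hnb : ¬ b ≤ (p.2 : ℝ) := by rw [hp']; linarith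
      show L p.2 = if b ≤ (p.2:ℝ) then L p.2 else h' (p.1, φ p.2.val)
      rw [if_neg hnb, hp', hφ0, hhc, hLcoe, hp', hc]
    · exact L.continuous.comp continuous_snd
    · apply Continuous.if_le (L.continuous.comp continuous_snd) _ continuous_const
        (continuous_subtype_val.comp continuous_snd)
      · intro p hp
        have hp' : (p.2 : ℝ) = b := hp.symm
        show L p.2 = h' (p.1, φ p.2.val)
        rw [hp', hφb1, hhb, hLcoe, hp', hb]
      · exact h'.continuous.comp
          (continuous_fst.prodMk (hφcont.comp (continuous_subtype_val.comp continuous_snd)))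
  refine ⟨L₁, ⟨⟨⟨⟨fun p =>
      if p.2.val ≤ c then L p.2 else if b ≤ p.2.val then L p.2 else h' (p.1, φ p.2.val),
      hHFcont⟩, ?_, ?_⟩, ?_⟩⟩, ?_, ?_⟩
  · intro x
    show (if x.val ≤ c then L x else if b ≤ x.val then L x else h' (0, φ x.val)) = L x
    split_ifs with hx1 hx2
    · rfl
    · rfl
    · push_neg at hx1 hx2
      rw [h'.apply_zero]
      show γ (φ x.val) = L x
      show ext01 ⇑L (c + (φ x.val).val * (b - c)) = L x
      rw [hγφ x.val hx1 hx2, hLcoe]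
  · intro x
    show (if x.val ≤ c then L x else if b ≤ x.val then L x else h' (1, φ x.val)) = L₁ x
    show _ = (if x.val ≤ c then L x else if b ≤ x.val then L x else basept a)
    split_ifs with hx1 hx2
    · rfl
    · rfl
    · rw [h'.apply_one]
      rfl
  · intro t x hx
    rcases hx with rfl | hx
    · show (if ((0:I):ℝ) ≤ c then L 0 else if b ≤ ((0:I):ℝ) then L 0 else _) = _
      rw [if_pos (by norm_num; exact h0)]
      rfl
    · have hx1 : x = 1 := hx
      subst hx1
      show (if ((1:I):ℝ) ≤ c then L 1 else if b ≤ ((1:I):ℝ) then L 1 else _) = _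
      rw [if_neg (by norm_num; linarith), if_pos (by norm_num; exact h1)]
      rfl
  · intro t ht
    show (if t.val ≤ c then L t else if b ≤ t.val then L t else basept a) = L t
    split_ifs with h1' h2'
    · rfl
    · rfl
    · push_neg at h1' h2'
      exact absurd ⟨h1', h2'⟩ ht
  · intro t ht
    show (if t.val ≤ c then L t else if b ≤ t.val then L t else basept a) = basept a
    split_ifs with h1' h2'
    · have : t.val = c := le_antisymm h1' ht.1
      rw [hLcoe, this, hc]
    · have : t.val = b := le_antisymm ht.2 h2'
      rw [hLcoe, this, hb]
    · rfl

end Griffiths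

namespace Griffiths

open unitInterval

lemma kill_many {ι : Type} (a : ι) (S : Finset (ℝ × ℝ)) :
    ∀ L : Path (basept a) (basept a),
    (∀ p ∈ S, 0 ≤ p.1 ∧ p.1 < p.2 ∧ p.2 ≤ 1) →
    (∀ p ∈ S, ext01 ⇑L p.1 = basept a ∧ ext01 ⇑L p.2 = basept a ∧
      ∀ t ∈ Set.Ioo p.1 p.2, ext01 ⇑L t ≠ basept a) →
    (∀ p ∈ S, ∀ q ∈ S, p ≠ q → ∀ t, t ∈ Set.Icc q.1 q.2 → t ∉ Set.Ioo p.1 p.2) →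
    ∃ L' : Path (basept a) (basept a), Path.Homotopic L L' ∧
      (∀ t : I, (∀ p ∈ S, t.val ∉ Set.Ioo p.1 p.2) → L' t = L t) ∧
      (∀ p ∈ S, ∀ t : I, t.val ∈ Set.Icc p.1 p.2 → L' t = basept a) := by
  classical
  induction S using Finset.induction_on with
  | empty =>
    intro L _ _ _
    exact ⟨L, Path.Homotopic.refl L, fun t _ => rfl,
      fun p hp => absurd hp (Finset.notMem_empty p)⟩
  | @insert p S hpS ih =>
    intro L hbd hend hdisj
    have hpmem := Finset.mem_insert_self p S
    obtain ⟨h0p, hlt, h1p⟩ := hbd p hpmem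
    obtain ⟨hc, hb, hint⟩ := hend p hpmem
    obtain ⟨L₁, hom1, hoff, hicc⟩ := kill_one a L h0p hlt h1p hc hb hint
    have hext : ∀ t : ℝ, t ∈ Set.Icc (0:ℝ) 1 → t ∉ Set.Ioo p.1 p.2 →
        ext01 ⇑L₁ t = ext01 ⇑L t := by
      intro t ht hno
      rw [ext01_of_mem _ ht, ext01_of_mem _ ht]
      exact hoff ⟨t, ht⟩ hno
    have hpq : ∀ q ∈ S, p ≠ q := fun q hq h => hpS (h ▸ hq)
    obtain ⟨L', hom2, hoff', hicc'⟩ := ih L₁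
      (fun q hq => hbd q (Finset.mem_insert_of_mem hq))
      (fun q hq => by
        obtain ⟨hq0, hqlt, hq1⟩ := hbd q (Finset.mem_insert_of_mem hq)
        obtain ⟨h1, h2, h3⟩ := hend q (Finset.mem_insert_of_mem hq)
        have hd := hdisj p hpmem q (Finset.mem_insert_of_mem hq) (hpq q hq)
        refine ⟨?_, ?_, ?_⟩
        · rw [hext q.1 ⟨hq0, by linarith⟩ (hd q.1 ⟨le_refl _, le_of_lt hqlt⟩)]
          exact h1
        · rw [hext q.2 ⟨by linarith, hq1⟩ (hd q.2 ⟨le_of_lt hqlt, le_refl _⟩)]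
          exact h2
        · intro t ht
          rw [hext t ⟨by linarith [ht.1], by linarith [ht.2]⟩
            (hd t ⟨le_of_lt ht.1, le_of_lt ht.2⟩)]
          exact h3 t ht)
      (fun q hq q' hq' hne => hdisj q (Finset.mem_insert_of_mem hq) q'
        (Finset.mem_insert_of_mem hq') hne)
    refine ⟨L', hom1.trans hom2, ?_, ?_⟩
    · intro t ht
      rw [hoff' t (fun q hq => ht q (Finset.mem_insert_of_mem hq)),
        hoff t (ht p hpmem)]
    · intro q hq t ht
      rcases Finset.mem_insert.1 hq with rfl | hq'
      · by_cases hcase : ∀ q' ∈ S, t.val ∉ Set.Ioo q'.1 q'.2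
        · rw [hoff' t hcase]
          exact hicc t ht
        · push_neg at hcase
          obtain ⟨q', hq', htq'⟩ := hcase
          exact absurd htq'
            (hdisj q' (Finset.mem_insert_of_mem hq') q hq
              (fun h => hpS (h ▸ hq')) t.val ht)
      · exact hicc' q hq' t ht

end Griffiths

open unitInterval

open Griffiths in
/-- **Lemma.** For every cardinal `κ ≥ 1` (the `κ`-fold Griffiths space being realized as
`GS ι` for a nonempty type `ι`), every `ε > 0` and every loop `L` based at the wedge point
`∘_κ`, there is a loop homotopic to `L` rel `{0,1}` whose image has diameter at most `ε`. -/
theorem loops_homotopic_to_small_loops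
    (ι : Type) (a : ι) (ε : ℝ) (hε : 0 < ε)
    (L : Path (Griffiths.basept a) (Griffiths.basept a)) :
    ∃ L' : Path (Griffiths.basept a) (Griffiths.basept a),
      Path.Homotopic L L' ∧ Metric.diam (Set.range ⇑L') ≤ ε := by
  classical
  set F : Set ℝ := {t | t ∈ Set.Icc (0:ℝ) 1 ∧ ext01 ⇑L t = basept a} with hFdef
  have hLcont : Continuous (ext01 ⇑L) := ext01_continuous L.toContinuousMap
  have hFclosed : IsClosed F := by
    have h : F = Set.Icc (0:ℝ) 1 ∩ (ext01 ⇑L) ⁻¹' {basept a} := by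
      ext t
      simp [hFdef, Set.mem_inter_iff, Set.mem_preimage]
    rw [h]
    exact isClosed_Icc.inter (IsClosed.preimage hLcont isClosed_singleton)
  have h0F : (0:ℝ) ∈ F := by
    refine ⟨⟨le_refl 0, zero_le_one⟩, ?_⟩
    rw [ext01_of_mem _ ⟨le_refl (0:ℝ), zero_le_one⟩]
    exact L.source
  have h1F : (1:ℝ) ∈ F := by
    refine ⟨⟨zero_le_one, le_refl 1⟩, ?_⟩
    rw [ext01_of_mem _ ⟨zero_le_one, le_refl (1:ℝ)⟩]
    exact L.target
  set K : Set I := {s | ε/2 ≤ dist (L s) (basept a)} with hKdef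
  have hKclosed : IsClosed K := isClosed_le continuous_const (L.continuous.dist continuous_const)
  have hKcompact : IsCompact K := hKclosed.isCompact
  have hKnotF : ∀ s : I, s ∈ K → s.val ∉ F := by
    intro s hs hmem
    have h := hmem.2
    rw [ext01_coe] at h
    simp only [hKdef, Set.mem_setOf_eq] at hs
    rw [h, dist_self] at hs
    linarith
  -- left and right endpoints of the component of a point outside F
  set cs : I → ℝ := fun s => sSup (F ∩ Set.Iic s.val) with hcsdef
  set ds : I → ℝ := fun s => sInf (F ∩ Set.Ici s.val) with hdsdef
  have hFne1 : ∀ s : I, (F ∩ Set.Iic s.val).Nonempty := fun s => ⟨0, h0F, s.2.1⟩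
  have hFbdd1 : ∀ s : I, BddAbove (F ∩ Set.Iic s.val) := fun s => ⟨s.val, fun x hx => hx.2⟩
  have hFne2 : ∀ s : I, (F ∩ Set.Ici s.val).Nonempty := fun s => ⟨1, h1F, s.2.2⟩
  have hFbdd2 : ∀ s : I, BddBelow (F ∩ Set.Ici s.val) := fun s => ⟨s.val, fun x hx => hx.2⟩
  have hcsF : ∀ s : I, cs s ∈ F := fun s =>
    ((hFclosed.inter isClosed_Iic).csSup_mem (hFne1 s) (hFbdd1 s)).1
  have hdsF : ∀ s : I, ds s ∈ F := fun s =>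
    ((hFclosed.inter isClosed_Ici).csInf_mem (hFne2 s) (hFbdd2 s)).1
  have hcsle : ∀ s : I, cs s ≤ s.val := fun s => csSup_le (hFne1 s) (fun x hx => hx.2)
  have hdsge : ∀ s : I, s.val ≤ ds s := fun s => le_csInf (hFne2 s) (fun x hx => hx.2)
  have hcslt : ∀ s : I, s.val ∉ F → cs s < s.val := fun s hs =>
    lt_of_le_of_ne (hcsle s) (fun h => hs (h ▸ hcsF s))
  have hdslt : ∀ s : I, s.val ∉ F → s.val < ds s := fun s hs =>
    lt_of_le_of_ne (hdsge s) (fun h => hs (h ▸ hdsF s))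
  have hcs0 : ∀ s : I, 0 ≤ cs s := fun s => le_csSup (hFbdd1 s) ⟨h0F, s.2.1⟩
  have hds1 : ∀ s : I, ds s ≤ 1 := fun s => csInf_le (hFbdd2 s) ⟨h1F, s.2.2⟩
  have hIooF : ∀ s : I, ∀ t ∈ Set.Ioo (cs s) (ds s), t ∉ F := by
    intro s t ht hmem
    rcases le_or_gt t s.val with h | h
    · exact absurd (le_csSup (hFbdd1 s) ⟨hmem, h⟩) (not_le.2 ht.1)
    · exact absurd (csInf_le (hFbdd2 s) ⟨hmem, le_of_lt h⟩) (not_le.2 ht.2)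
  have hIooeq : ∀ s s' : I,
      (Set.Ioo (cs s) (ds s) ∩ Set.Ioo (cs s') (ds s')).Nonempty →
      cs s = cs s' ∧ ds s = ds s' := by
    have hcc : ∀ u u' : I, ∀ x, x ∈ Set.Ioo (cs u) (ds u) →
        x ∈ Set.Ioo (cs u') (ds u') → cs u' ≤ cs u := by
      intro u u' x hx hx'
      by_contra hltc
      push_neg at hltc
      exact hIooF u (cs u') ⟨hltc, lt_trans hx'.1 hx.2⟩ (hcsF u')
    have hdd : ∀ u u' : I, ∀ x, x ∈ Set.Ioo (cs u) (ds u) →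
        x ∈ Set.Ioo (cs u') (ds u') → ds u ≤ ds u' := by
      intro u u' x hx hx'
      by_contra hltd
      push_neg at hltd
      exact hIooF u (ds u') ⟨lt_trans hx.1 hx'.2, hltd⟩ (hdsF u')
    rintro s s' ⟨t, ht, ht'⟩
    exact ⟨le_antisymm (hcc s' s t ht' ht) (hcc s s' t ht ht'),
      le_antisymm (hdd s s' t ht ht') (hdd s' s t ht' ht)⟩
  -- compactness: finitely many components suffice to cover K
  have hUopen : ∀ k : K, IsOpen {t : I | t.val ∈ Set.Ioo (cs k.val) (ds k.val)} :=
    fun k => isOpen_Ioo.preimage continuous_subtype_val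
  have hcover : K ⊆ ⋃ k : K, {t : I | t.val ∈ Set.Ioo (cs k.val) (ds k.val)} := by
    intro s hs
    exact Set.mem_iUnion.2 ⟨⟨s, hs⟩, hcslt s (hKnotF s hs), hdslt s (hKnotF s hs)⟩
  obtain ⟨T, hT⟩ := hKcompact.elim_finite_subcover _ hUopen hcover
  set S : Finset (ℝ × ℝ) := T.image (fun k => (cs k.val, ds k.val)) with hSdef
  have hmemS : ∀ p ∈ S, ∃ k : K, p = (cs k.val, ds k.val) := by
    intro p hp
    obtain ⟨k, _, hk⟩ := Finset.mem_image.1 hp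
    exact ⟨k, hk.symm⟩
  have hbd : ∀ p ∈ S, 0 ≤ p.1 ∧ p.1 < p.2 ∧ p.2 ≤ 1 := by
    intro p hp
    obtain ⟨k, rfl⟩ := hmemS p hp
    have hnF := hKnotF k.val k.2
    exact ⟨hcs0 k.val, lt_trans (hcslt k.val hnF) (hdslt k.val hnF), hds1 k.val⟩
  have hIccsub : ∀ s : I, ∀ t, t ∈ Set.Ioo (cs s) (ds s) → t ∈ Set.Icc (0:ℝ) 1 :=
    fun s t ht => ⟨le_trans (hcs0 s) (le_of_lt ht.1), le_trans (le_of_lt ht.2) (hds1 s)⟩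
  have hend : ∀ p ∈ S, ext01 ⇑L p.1 = basept a ∧ ext01 ⇑L p.2 = basept a ∧
      ∀ t ∈ Set.Ioo p.1 p.2, ext01 ⇑L t ≠ basept a := by
    intro p hp
    obtain ⟨k, rfl⟩ := hmemS p hp
    refine ⟨(hcsF k.val).2, (hdsF k.val).2, ?_⟩
    intro t ht hbad
    exact hIooF k.val t ht ⟨hIccsub k.val t ht, hbad⟩
  have hdisj : ∀ p ∈ S, ∀ q ∈ S, p ≠ q → ∀ t, t ∈ Set.Icc q.1 q.2 →
      t ∉ Set.Ioo p.1 p.2 := by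
    intro p hp q hq hne t ht htIoo
    obtain ⟨k, rfl⟩ := hmemS p hp
    obtain ⟨k', rfl⟩ := hmemS q hq
    rcases eq_or_lt_of_le ht.1 with h1 | h1
    · exact hIooF k.val t htIoo (h1 ▸ hcsF k'.val)
    rcases eq_or_lt_of_le ht.2 with h2 | h2
    · exact hIooF k.val t htIoo (h2 ▸ hdsF k'.val)
    have heq := hIooeq k.val k'.val ⟨t, htIoo, h1, h2⟩
    exact hne (Prod.ext heq.1 heq.2)
  obtain ⟨L', hom, hoff, hicc⟩ := kill_many a S L hbd hend hdisj
  refine ⟨L', hom, ?_⟩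
  have hsmall : ∀ t : I, dist (L' t) (basept a) ≤ ε/2 := by
    intro t
    by_cases hcase : ∀ p ∈ S, t.val ∉ Set.Ioo p.1 p.2
    · rw [hoff t hcase]
      by_contra hbig
      push_neg at hbig
      have htK : t ∈ K := le_of_lt hbig
      obtain ⟨k, hkT, htk⟩ := Set.mem_iUnion₂.1 (hT htK)
      exact hcase (cs k.val, ds k.val) (Finset.mem_image_of_mem _ hkT) htk
    · push_neg at hcase
      obtain ⟨p, hp, htp⟩ := hcase
      rw [hicc p hp t ⟨le_of_lt htp.1, le_of_lt htp.2⟩, dist_self]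
      linarith
  refine Metric.diam_le_of_forall_dist_le (le_of_lt hε) ?_
  rintro x ⟨t, rfl⟩ y ⟨t', rfl⟩
  calc dist (L' t) (L' t') ≤ dist (L' t) (basept a) + dist (L' t') (basept a) :=
        dist_triangle_right _ _ _
    _ ≤ ε/2 + ε/2 := add_le_add (hsmall t) (hsmall t')
    _ = ε := by ring
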